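/- For the discrete logistic map u_{n+1} = u_n + h r u_n (1 - u_n/K) with r, K, h > 0 and h r ≤ 1: if 0 < u_0 < K then 0 < u_n < K for all n, and the sequence (u_n) is strictly increasing and converges to K. -/
import Mathlib


open Filter

/-- For the Euler-discretized logistic map `u_{n+1} = u_n + h r u_n (1 - u_n/K)`
with `r, K, h > 0` and `h r ≤ 1`: if `0 < u 0 < K` then `0 < u n < K` for all `n`,
and `(u n)` is strictly increasing and converges to `K`. -/
theorem discrete_logistic_monotone_convergence (r K h : ℝ)
    (hr : 0 < r) (hK : 0 < K) (hh : 0 < h) (hhr : h * r ≤ 1)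
    (u : ℕ → ℝ) (hrec : ∀ n, u (n + 1) = u n + h * r * u n * (1 - u n / K))
    (h0 : 0 < u 0) (h0K : u 0 < K) :
    (∀ n, 0 < u n ∧ u n < K) ∧ StrictMono u ∧ Tendsto u atTop (nhds K) := by
  have hKne : (K:ℝ) ≠ 0 := ne_of_gt hK
  have hb : ∀ n, 0 < u n ∧ u n < K := by
    intro n
    induction n with
    | zero => exact ⟨h0, h0K⟩
    | succ n ih =>
      obtain ⟨h1, h2⟩ := ih
      have hpos : 0 < 1 - u n / K := by
        rw [sub_pos]; exact (div_lt_one hK).2 h2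
      constructor
      · rw [hrec]; positivity
      · rw [hrec]
        have key : h * r * u n * (1 - u n / K) = h * r * u n * (K - u n) / K := by
          field_simp
        rw [key, ← sub_pos]
        have e2 : K - (u n + h * r * u n * (K - u n) / K) =
            (K - u n) * (K - h * r * u n) / K := by
          field_simp; ring
        rw [e2]
        apply div_pos _ hK
        apply mul_pos (sub_pos.2 h2)
        nlinarith [mul_pos hh hr]
  have hmono : StrictMono u := by
    apply strictMono_nat_of_lt_succ
    intro n
    obtain ⟨h1, h2⟩ := hb n
    have hpos : 0 < 1 - u n / K := by
      rw [sub_pos]; exact (div_lt_one hK).2 h2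
    rw [hrec]
    nlinarith [mul_pos (mul_pos (mul_pos hh hr) h1) hpos]
  have hbdd : BddAbove (Set.range u) := by
    refine ⟨K, ?_⟩
    rintro x ⟨n, rfl⟩
    exact (hb n).2.le
  have htend : Tendsto u atTop (nhds (⨆ n, u n)) :=
    tendsto_atTop_ciSup hmono.monotone hbdd
  set L := ⨆ n, u n with hL
  have hL0 : 0 < L := lt_of_lt_of_le h0 (le_ciSup hbdd 0)
  have hLK : L ≤ K := ciSup_le fun n => (hb n).2.le
  have htend' : Tendsto (fun n => u (n + 1)) atTop (nhds L) :=
    htend.comp (tendsto_add_atTop_nat 1)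
  have htend'' : Tendsto (fun n => u n + h * r * u n * (1 - u n / K)) atTop
      (nhds (L + h * r * L * (1 - L / K))) := by
    apply Tendsto.add htend
    exact ((tendsto_const_nhds.mul htend).mul
      (tendsto_const_nhds.sub (htend.div_const K)))
  have heq : L + h * r * L * (1 - L / K) = L := by
    apply tendsto_nhds_unique _ htend'
    convert htend'' using 2
    exact (hrec _)
  have hLeq : L = K := by
    have : h * r * L * (1 - L / K) = 0 := by linarith
    rcases mul_eq_zero.1 this with h' | h'
    · exfalso
      rcases mul_eq_zero.1 h' with h'' | h''
      · exact (mul_pos hh hr).ne' h''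
      · exact hL0.ne' h''
    · have : L / K = 1 := by linarith
      field_simp at this
      exact this
  exact ⟨hb, hmono, hLeq ▸ htend⟩
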